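/- arXiv:1701.04107 — 5 statements merged into one kernel-verified Lean document; each statement's English description precedes it below -/
import Mathlib

section
/- For integers s ≥ 3, m ≥ 1, and any k ≤ m, we have ∑_{j=1}^{k-1} C(sm+s-2, j) ≤ (1/(s-2)) · C(sm+s-2, k). -/
theorem stmt_0 (s m k : ℕ) (hs : 3 ≤ s) (hm : 1 ≤ m) (hk : k ≤ m) :
    (∑ j ∈ Finset.Ico 1 k, ((s * m + s - 2).choose j : ℚ)) ≤
      (1 / (s - 2 : ℚ)) * ((s * m + s - 2).choose k : ℚ) := by
  set n := s * m + s - 2 with hn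
  have hs2 : (0:ℚ) < (s:ℚ) - 2 := by
    have : (3:ℚ) ≤ (s:ℚ) := by exact_mod_cast hs
    linarith
  have triv : ∀ j : ℕ, (0:ℚ) ≤ 1 / ((s:ℚ) - 2) * ((n.choose j : ℚ)) := fun j =>
    mul_nonneg (le_of_lt (one_div_pos.2 hs2)) (by positivity)
  induction k with
  | zero => simpa using triv 0
  | succ k ih =>
      rcases Nat.eq_zero_or_pos k with rfl | hkpos
      · simpa using triv 1
      have hk' : k ≤ m := le_of_lt hk
      have ih' := ih hk'
      -- key nat inequality : (s-1) * choose n k ≤ choose n (k+1)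
      have e1 : (s-1)*m = s*m - m := Nat.sub_one_mul s m
      have e2 : (s-1)*(k+1) ≤ (s-1)*m := Nat.mul_le_mul_left _ hk
      have hsm : m ≤ s*m := Nat.le_mul_of_pos_left m (by omega)
      have h2 : (s-1)*(k+1) ≤ n - k := by omega
      have h1 : n.choose (k+1) * (k+1) = n.choose k * (n - k) :=
        Nat.choose_succ_right_eq n k
      have h3 : (s-1) * n.choose k * (k+1) ≤ n.choose (k+1) * (k+1) := by
        calc (s-1) * n.choose k * (k+1) = n.choose k * ((s-1)*(k+1)) := by ring
          _ ≤ n.choose k * (n-k) := Nat.mul_le_mul_left _ h2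
          _ = n.choose (k+1) * (k+1) := h1.symm
      have hkey : (s-1) * n.choose k ≤ n.choose (k+1) :=
        Nat.le_of_mul_le_mul_right h3 (Nat.succ_pos k)
      have hkeyQ : ((s:ℚ)-1) * (n.choose k : ℚ) ≤ (n.choose (k+1) : ℚ) := by
        have := (Nat.cast_le (α := ℚ)).2 hkey
        push_cast [Nat.cast_sub (show 1 ≤ s by omega)] at this
        convert this using 2 <;> push_cast <;> ring_nf
      have hsum : (∑ j ∈ Finset.Ico 1 (k+1), ((n.choose j : ℚ)))
          = (∑ j ∈ Finset.Ico 1 k, ((n.choose j : ℚ))) + (n.choose k : ℚ) :=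
        Finset.sum_Ico_succ_top hkpos _
      rw [hsum]
      rw [one_div, inv_mul_eq_div, le_div_iff₀ hs2] at ih' ⊢
      nlinarith [ih', hkeyQ, hs2]
end

section
/- If F ⊆ 2^{[6]} is a family with no 4 pairwise disjoint members, then |F| ≤ 2^6 - 6 = 58. -/
open Finset

private lemma fne {α : Type*} {s t : Finset α} {a : α} (h1 : a ∈ s) (h2 : a ∉ t) : s ≠ t :=
  fun h => h2 (h ▸ h1)

private lemma card_six {α : Type*} [DecidableEq α] {a b c d e f : α}
    (h1 : a ≠ b) (h2 : a ≠ c) (h3 : a ≠ d) (h4 : a ≠ e) (h5 : a ≠ f)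
    (h6 : b ≠ c) (h7 : b ≠ d) (h8 : b ≠ e) (h9 : b ≠ f)
    (h10 : c ≠ d) (h11 : c ≠ e) (h12 : c ≠ f)
    (h13 : d ≠ e) (h14 : d ≠ f) (h15 : e ≠ f) :
    ({a, b, c, d, e, f} : Finset α).card = 6 := by
  rw [card_insert_of_notMem (by simp [*]), card_insert_of_notMem (by simp [*]),
      card_insert_of_notMem (by simp [*]), card_insert_of_notMem (by simp [*]),
      card_insert_of_notMem (by simp [*]), card_singleton]

private lemma snepair {α : Type*} [DecidableEq α] {a b c : α} (h : a ≠ c) :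
    ({c} : Finset α) ≠ {a, b} :=
  (fne (show a ∈ ({a, b} : Finset α) by simp) (by simp [h])).symm

private lemma snetriple {α : Type*} [DecidableEq α] {a b c d : α} (h : a ≠ d) :
    ({d} : Finset α) ≠ {a, b, c} :=
  (fne (show a ∈ ({a, b, c} : Finset α) by simp) (by simp [h])).symm

private lemma snepair' {α : Type*} [DecidableEq α] {a b c : α} (h : b ≠ c) :
    ({c} : Finset α) ≠ {a, b} :=
  (fne (show b ∈ ({a, b} : Finset α) by simp) (by simp [h])).symm

private lemma snetriple' {α : Type*} [DecidableEq α] {a b c d : α} (h : b ≠ d) :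
    ({d} : Finset α) ≠ {a, b, c} :=
  (fne (show b ∈ ({a, b, c} : Finset α) by simp) (by simp [h])).symm

private lemma snetriple'' {α : Type*} [DecidableEq α] {a b c d : α} (h : c ≠ d) :
    ({d} : Finset α) ≠ {a, b, c} :=
  (fne (show c ∈ ({a, b, c} : Finset α) by simp) (by simp [h])).symm

private lemma dis12 {a b c : Fin 6} (h1 : a ≠ b) (h2 : a ≠ c) :
    Disjoint ({a} : Finset (Fin 6)) {b, c} := by
  simp [Finset.disjoint_left, h1, h2]

private lemma dis13 {a b c d : Fin 6} (h1 : a ≠ b) (h2 : a ≠ c) (h3 : a ≠ d) :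
    Disjoint ({a} : Finset (Fin 6)) {b, c, d} := by
  simp [Finset.disjoint_left, h1, h2, h3]

private lemma dis22 {a b c d : Fin 6} (h1 : a ≠ c) (h2 : a ≠ d) (h3 : b ≠ c) (h4 : b ≠ d) :
    Disjoint ({a, b} : Finset (Fin 6)) {c, d} := by
  simp only [Finset.disjoint_left, mem_insert, mem_singleton]
  rintro x (rfl | rfl) <;> simp [h1, h2, h3, h4]

private lemma quad_false {F : Finset (Finset (Fin 6))}
    (h : ¬ ∃ S : Finset (Finset (Fin 6)),
        S ⊆ F ∧ S.card = 4 ∧ (S : Set (Finset (Fin 6))).Pairwise Disjoint)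
    {a b c d : Finset (Fin 6)} (ha : a ∈ F) (hb : b ∈ F) (hc : c ∈ F) (hd : d ∈ F)
    (hab : a ≠ b) (hac : a ≠ c) (had : a ≠ d) (hbc : b ≠ c) (hbd : b ≠ d) (hcd : c ≠ d)
    (dab : Disjoint a b) (dac : Disjoint a c) (dad : Disjoint a d)
    (dbc : Disjoint b c) (dbd : Disjoint b d) (dcd : Disjoint c d) : False := by
  apply h
  refine ⟨{a, b, c, d}, ?_, ?_, ?_⟩
  · intro x hx; simp only [mem_insert, mem_singleton] at hx
    rcases hx with rfl | rfl | rfl | rfl <;> assumption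
  · rw [card_insert_of_notMem (by simp [hab, hac, had]),
        card_insert_of_notMem (by simp [hbc, hbd]),
        card_insert_of_notMem (by simp [hcd]), card_singleton]
  · intro x hx y hy hxy
    simp only [coe_insert, coe_singleton, Set.mem_insert_iff, Set.mem_singleton_iff] at hx hy
    rcases hx with rfl | rfl | rfl | rfl <;> rcases hy with rfl | rfl | rfl | rfl <;>
      first
        | exact absurd rfl hxy
        | assumption
        | exact dab.symm
        | exact dac.symm
        | exact dad.symm
        | exact dbc.symm
        | exact dbd.symm
        | exact dcd.symm

private def tt : Fin 6 → Finset (Finset (Fin 6)) :=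
  ![{{0,1},{2,3},{4,5}}, {{0,2},{1,4},{3,5}}, {{0,3},{1,5},{2,4}},
    {{0,4},{1,3},{2,5}}, {{0,5},{1,2},{3,4}}, {{0},{1},{2,3,4,5}}]

private lemma quad_of_triple {F : Finset (Finset (Fin 6))}
    (h : ¬ ∃ S : Finset (Finset (Fin 6)),
        S ⊆ F ∧ S.card = 4 ∧ (S : Set (Finset (Fin 6))).Pairwise Disjoint)
    (h0 : (∅ : Finset (Fin 6)) ∈ F) {a b c : Finset (Fin 6)}
    (hsub : ({a, b, c} : Finset (Finset (Fin 6))) ⊆ F)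
    (hab : a ≠ b) (hac : a ≠ c) (hbc : b ≠ c)
    (hea : (∅ : Finset (Fin 6)) ≠ a) (heb : (∅ : Finset (Fin 6)) ≠ b)
    (hec : (∅ : Finset (Fin 6)) ≠ c)
    (dab : Disjoint a b) (dac : Disjoint a c) (dbc : Disjoint b c) : False :=
  quad_false h h0 (hsub (by simp)) (hsub (by simp)) (hsub (by simp))
    hea heb hec hab hac hbc
    (by simp) (by simp) (by simp) dab dac dbc

theorem stmt_8 (F : Finset (Finset (Fin 6)))
    (h : ¬ ∃ S : Finset (Finset (Fin 6)),
        S ⊆ F ∧ S.card = 4 ∧ (S : Set (Finset (Fin 6))).Pairwise Disjoint) :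
    F.card ≤ 58 := by
  by_contra hF
  push_neg at hF
  set B : Finset (Finset (Fin 6)) := Finset.univ \ F with hBdef
  have hBcard : B.card ≤ 5 := by
    have h1 : B.card = Finset.univ.card - F.card := card_sdiff_of_subset (subset_univ F)
    have h2 : (Finset.univ : Finset (Finset (Fin 6))).card = 64 := by
      simp [Finset.card_univ]
    have h3 : F.card ≤ Finset.univ.card := card_le_univ F
    omega
  have hmem : ∀ X : Finset (Fin 6), X ∉ F → X ∈ B :=
    fun X hX => mem_sdiff.2 ⟨mem_univ X, hX⟩
  by_cases h0 : (∅ : Finset (Fin 6)) ∈ F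
  · -- Case 1 : ∅ ∈ F; six vertex-disjoint triples of pairwise disjoint nonempty sets
    have htriple : ∃ i : Fin 6, tt i ⊆ F := by
      by_contra hno
      push_neg at hno
      have h1 : ∀ i : Fin 6, (tt i ∩ B).Nonempty := by
        intro i
        obtain ⟨x, hx1, hx2⟩ := not_subset.1 (hno i)
        exact ⟨x, mem_inter.2 ⟨hx1, hmem x hx2⟩⟩
      have hd : ∀ i j : Fin 6, i ≠ j → Disjoint (tt i) (tt j) := by decide
      have h6 : 6 ≤ B.card := by
        calc 6 = ∑ _i : Fin 6, 1 := by simp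
          _ ≤ ∑ i : Fin 6, (tt i ∩ B).card :=
              Finset.sum_le_sum (fun i _ => card_pos.2 (h1 i))
          _ = (Finset.univ.biUnion (fun i => tt i ∩ B)).card :=
              (card_biUnion (fun i _ j _ hij =>
                (hd i j hij).mono inter_subset_left inter_subset_left)).symm
          _ ≤ B.card := card_le_card (by
              intro x hx
              simp only [mem_biUnion, mem_inter] at hx
              obtain ⟨i, _, _, hxB⟩ := hx
              exact hxB)
      omega
    obtain ⟨i, hi⟩ := htriple
    fin_cases i
    · exact quad_of_triple (a := {0,1}) (b := {2,3}) (c := {4,5}) h h0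
        (Finset.Subset.trans (by decide) hi) (by decide) (by decide) (by decide)
        (by decide) (by decide) (by decide) (by decide) (by decide) (by decide)
    · exact quad_of_triple (a := {0,2}) (b := {1,4}) (c := {3,5}) h h0
        (Finset.Subset.trans (by decide) hi) (by decide) (by decide) (by decide)
        (by decide) (by decide) (by decide) (by decide) (by decide) (by decide)
    · exact quad_of_triple (a := {0,3}) (b := {1,5}) (c := {2,4}) h h0
        (Finset.Subset.trans (by decide) hi) (by decide) (by decide) (by decide)
        (by decide) (by decide) (by decide) (by decide) (by decide) (by decide)
    · exact quad_of_triple (a := {0,4}) (b := {1,3}) (c := {2,5}) h h0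
        (Finset.Subset.trans (by decide) hi) (by decide) (by decide) (by decide)
        (by decide) (by decide) (by decide) (by decide) (by decide) (by decide)
    · exact quad_of_triple (a := {0,5}) (b := {1,2}) (c := {3,4}) h h0
        (Finset.Subset.trans (by decide) hi) (by decide) (by decide) (by decide)
        (by decide) (by decide) (by decide) (by decide) (by decide) (by decide)
    · exact quad_of_triple (a := {0}) (b := {1}) (c := {2,3,4,5}) h h0
        (Finset.Subset.trans (by decide) hi) (by decide) (by decide) (by decide)
        (by decide) (by decide) (by decide) (by decide) (by decide) (by decide)
  · -- Case 2 : ∅ ∉ F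
    have h0B : (∅ : Finset (Fin 6)) ∈ B := hmem _ h0
    set SingF : Finset (Fin 6) := Finset.univ.filter (fun i => ({i} : Finset (Fin 6)) ∈ F)
      with hSdef
    have hCin : ∀ i : Fin 6, i ∈ SingFᶜ → ({i} : Finset (Fin 6)) ∈ B := by
      intro i hi
      apply hmem
      intro hcon
      exact (mem_compl.1 hi) (mem_filter.2 ⟨mem_univ i, hcon⟩)
    have hSin : ∀ i : Fin 6, i ∈ SingF → ({i} : Finset (Fin 6)) ∈ F := by
      intro i hi; exact (mem_filter.1 hi).2
    have hC4 : (SingFᶜ : Finset (Fin 6)).card ≤ 4 := by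
      have hmap : ∀ a ∈ (SingFᶜ : Finset (Fin 6)),
          ({a} : Finset (Fin 6)) ∈ B.erase ∅ := by
        intro a ha
        exact mem_erase.2 ⟨Finset.singleton_ne_empty a, hCin a ha⟩
      have h1 := Finset.card_le_card_of_injOn (fun a => ({a} : Finset (Fin 6))) hmap
        (fun a _ b _ hab => Finset.singleton_injective hab)
      have h2 : (B.erase ∅).card = B.card - 1 := card_erase_of_mem h0B
      omega
    have hcompl : SingF.card + (SingFᶜ : Finset (Fin 6)).card = 6 := by
      have h1 := Finset.card_compl (SingF)
      simp only [Fintype.card_fin] at h1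
      have hle := Finset.card_le_univ SingF
      simp only [Finset.card_univ, Fintype.card_fin] at hle
      omega
    obtain h2 | h3 | h4 : SingF.card = 2 ∨ SingF.card = 3 ∨ 4 ≤ SingF.card := by omega
    · -- exactly 2 singletons present, exactly 4 missing
      obtain ⟨x, y, hxy, hSeq⟩ := Finset.card_eq_two.1 h2
      have hx : x ∈ SingF := by rw [hSeq]; simp
      have hy : y ∈ SingF := by rw [hSeq]; simp
      have hCc : (SingFᶜ : Finset (Fin 6)).card = 4 := by omega
      obtain ⟨u, hu⟩ : ∃ u, u ∈ (SingFᶜ : Finset (Fin 6)) :=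
        Finset.card_pos.1 (by omega)
      have herase : ((SingFᶜ : Finset (Fin 6)).erase u).card = 3 := by
        rw [card_erase_of_mem hu, hCc]
      obtain ⟨v, w, s, hvw, hvs, hws, hveq⟩ := Finset.card_eq_three.1 herase
      have hvE : v ∈ (SingFᶜ : Finset (Fin 6)).erase u := by rw [hveq]; simp
      have hwE : w ∈ (SingFᶜ : Finset (Fin 6)).erase u := by rw [hveq]; simp
      have hsE : s ∈ (SingFᶜ : Finset (Fin 6)).erase u := by rw [hveq]; simp
      have hv : v ∈ (SingFᶜ : Finset (Fin 6)) := mem_of_mem_erase hvE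
      have hw : w ∈ (SingFᶜ : Finset (Fin 6)) := mem_of_mem_erase hwE
      have hs : s ∈ (SingFᶜ : Finset (Fin 6)) := mem_of_mem_erase hsE
      have huv : u ≠ v := (ne_of_mem_erase hvE).symm
      have huw : u ≠ w := (ne_of_mem_erase hwE).symm
      have hus : u ≠ s := (ne_of_mem_erase hsE).symm
      have hxu : x ≠ u := fun hc => (mem_compl.1 hu) (hc ▸ hx)
      have hxv : x ≠ v := fun hc => (mem_compl.1 hv) (hc ▸ hx)
      have hxw : x ≠ w := fun hc => (mem_compl.1 hw) (hc ▸ hx)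
      have hxs : x ≠ s := fun hc => (mem_compl.1 hs) (hc ▸ hx)
      have hyu : y ≠ u := fun hc => (mem_compl.1 hu) (hc ▸ hy)
      have hyv : y ≠ v := fun hc => (mem_compl.1 hv) (hc ▸ hy)
      have hyw : y ≠ w := fun hc => (mem_compl.1 hw) (hc ▸ hy)
      have hys : y ≠ s := fun hc => (mem_compl.1 hs) (hc ▸ hy)
      have hP1 : ({u, v} : Finset (Fin 6)) ∈ F := by
        by_contra hP
        have hsub : ({∅, {u}, {v}, {w}, {s}, {u, v}} : Finset (Finset (Fin 6))) ⊆ B := by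
          intro X hX
          simp only [mem_insert, mem_singleton] at hX
          rcases hX with rfl | rfl | rfl | rfl | rfl | rfl
          · exact h0B
          · exact hCin u hu
          · exact hCin v hv
          · exact hCin w hw
          · exact hCin s hs
          · exact hmem _ hP
        have hc6 := card_six
          (Finset.singleton_ne_empty u).symm (Finset.singleton_ne_empty v).symm
          (Finset.singleton_ne_empty w).symm (Finset.singleton_ne_empty s).symm
          (Finset.insert_ne_empty u {v}).symm
          (by simp [huv]) (by simp [huw]) (by simp [hus]) (snepair' huv.symm)
          (by simp [hvw]) (by simp [hvs]) (snepair huv)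
          (by simp [hws]) (snepair huw) (snepair hus)
        have hle6 := card_le_card hsub
        rw [hc6] at hle6
        omega
      have hP2 : ({w, s} : Finset (Fin 6)) ∈ F := by
        by_contra hP
        have hsub : ({∅, {u}, {v}, {w}, {s}, {w, s}} : Finset (Finset (Fin 6))) ⊆ B := by
          intro X hX
          simp only [mem_insert, mem_singleton] at hX
          rcases hX with rfl | rfl | rfl | rfl | rfl | rfl
          · exact h0B
          · exact hCin u hu
          · exact hCin v hv
          · exact hCin w hw
          · exact hCin s hs
          · exact hmem _ hP
        have hc6 := card_six
          (Finset.singleton_ne_empty u).symm (Finset.singleton_ne_empty v).symm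
          (Finset.singleton_ne_empty w).symm (Finset.singleton_ne_empty s).symm
          (Finset.insert_ne_empty w {s}).symm
          (by simp [huv]) (by simp [huw]) (by simp [hus]) (snepair huw.symm)
          (by simp [hvw]) (by simp [hvs]) (snepair hvw.symm)
          (by simp [hws]) (snepair' hws.symm) (snepair hws)
        have hle6 := card_le_card hsub
        rw [hc6] at hle6
        omega
      exact quad_false h (hSin x hx) (hSin y hy) hP1 hP2
        (by simp [hxy, Ne.symm hxy]) (snepair hxu.symm) (snepair hxw.symm)
        (snepair hyu.symm) (snepair hyw.symm)
        (fne (show u ∈ ({u, v} : Finset (Fin 6)) by simp)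
          (by simp [huw, hus]))
        (by simp [hxy, Ne.symm hxy]) (dis12 hxu hxv) (dis12 hxw hxs)
        (dis12 hyu hyv) (dis12 hyw hys) (dis22 huw hus hvw hvs)
    · -- exactly 3 singletons present, exactly 3 missing
      obtain ⟨x, y, z, hxy, hxz, hyz, hSeq⟩ := Finset.card_eq_three.1 h3
      have hx : x ∈ SingF := by rw [hSeq]; simp
      have hy : y ∈ SingF := by rw [hSeq]; simp
      have hz : z ∈ SingF := by rw [hSeq]; simp
      have hCc : (SingFᶜ : Finset (Fin 6)).card = 3 := by omega
      obtain ⟨u, v, w, huv, huw, hvw, hCeq⟩ := Finset.card_eq_three.1 hCc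
      have hu : u ∈ (SingFᶜ : Finset (Fin 6)) := by rw [hCeq]; simp
      have hv : v ∈ (SingFᶜ : Finset (Fin 6)) := by rw [hCeq]; simp
      have hw : w ∈ (SingFᶜ : Finset (Fin 6)) := by rw [hCeq]; simp
      have hxu : x ≠ u := fun hc => (mem_compl.1 hu) (hc ▸ hx)
      have hxv : x ≠ v := fun hc => (mem_compl.1 hv) (hc ▸ hx)
      have hxw : x ≠ w := fun hc => (mem_compl.1 hw) (hc ▸ hx)
      have hyu : y ≠ u := fun hc => (mem_compl.1 hu) (hc ▸ hy)
      have hyv : y ≠ v := fun hc => (mem_compl.1 hv) (hc ▸ hy)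
      have hyw : y ≠ w := fun hc => (mem_compl.1 hw) (hc ▸ hy)
      have hzu : z ≠ u := fun hc => (mem_compl.1 hu) (hc ▸ hz)
      have hzv : z ≠ v := fun hc => (mem_compl.1 hv) (hc ▸ hz)
      have hzw : z ≠ w := fun hc => (mem_compl.1 hw) (hc ▸ hz)
      by_cases hW2 : ({u, v} : Finset (Fin 6)) ∈ F
      · exact quad_false h (hSin x hx) (hSin y hy) (hSin z hz) hW2
          (by simp [hxy, Ne.symm hxy]) (by simp [hxz, Ne.symm hxz]) (snepair hxu.symm)
          (by simp [hyz, Ne.symm hyz]) (snepair hyu.symm) (snepair hzu.symm)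
          (by simp [hxy, Ne.symm hxy]) (by simp [hxz, Ne.symm hxz]) (dis12 hxu hxv)
          (by simp [hyz, Ne.symm hyz]) (dis12 hyu hyv) (dis12 hzu hzv)
      by_cases hW3 : ({u, v, w} : Finset (Fin 6)) ∈ F
      · exact quad_false h (hSin x hx) (hSin y hy) (hSin z hz) hW3
          (by simp [hxy, Ne.symm hxy]) (by simp [hxz, Ne.symm hxz]) (snetriple hxu.symm)
          (by simp [hyz, Ne.symm hyz]) (snetriple hyu.symm) (snetriple hzu.symm)
          (by simp [hxy, Ne.symm hxy]) (by simp [hxz, Ne.symm hxz]) (dis13 hxu hxv hxw)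
          (by simp [hyz, Ne.symm hyz]) (dis13 hyu hyv hyw) (dis13 hzu hzv hzw)
      -- both pair and triple missing: six missing sets, contradiction
      have hsub : ({∅, {u}, {v}, {w}, {u, v}, {u, v, w}} : Finset (Finset (Fin 6))) ⊆ B := by
        intro X hX
        simp only [mem_insert, mem_singleton] at hX
        rcases hX with rfl | rfl | rfl | rfl | rfl | rfl
        · exact h0B
        · exact hCin u hu
        · exact hCin v hv
        · exact hCin w hw
        · exact hmem _ hW2
        · exact hmem _ hW3
      have hc6 := card_six
        (Finset.singleton_ne_empty u).symm (Finset.singleton_ne_empty v).symm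
        (Finset.singleton_ne_empty w).symm
        (Finset.insert_ne_empty u {v}).symm (Finset.insert_ne_empty u {v, w}).symm
        (by simp [huv]) (by simp [huw]) (snepair' huv.symm) (snetriple' huv.symm)
        (by simp [hvw]) (snepair huv) (snetriple huv)
        (snepair huw)
        (snetriple huw)
        ((fne (show w ∈ ({u, v, w} : Finset (Fin 6)) by simp)
          (by simp [Ne.symm huw, Ne.symm hvw])).symm)
      have hle6 := card_le_card hsub
      rw [hc6] at hle6
      omega
    · -- at least 4 singletons present
      obtain ⟨x, hx⟩ : ∃ x, x ∈ SingF := Finset.card_pos.1 (by omega)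
      have herase : 3 ≤ (SingF.erase x).card := by
        rw [card_erase_of_mem hx]; omega
      obtain ⟨s3, hsub3, hcard3⟩ := Finset.exists_subset_card_eq herase
      obtain ⟨y, z, w, hyz, hyw, hzw, rfl⟩ := Finset.card_eq_three.1 hcard3
      have hy : y ∈ SingF.erase x := hsub3 (by simp)
      have hz : z ∈ SingF.erase x := hsub3 (by simp)
      have hw : w ∈ SingF.erase x := hsub3 (by simp)
      exact quad_false h (hSin x hx) (hSin y (mem_of_mem_erase hy))
        (hSin z (mem_of_mem_erase hz)) (hSin w (mem_of_mem_erase hw))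
        (by simp [ne_of_mem_erase hy, (ne_of_mem_erase hy).symm]) (by simp [ne_of_mem_erase hz, (ne_of_mem_erase hz).symm])
        (by simp [ne_of_mem_erase hw, (ne_of_mem_erase hw).symm]) (by simp [hyz, Ne.symm hyz]) (by simp [hyw, Ne.symm hyw]) (by simp [hzw, Ne.symm hzw])
        (by simp [ne_of_mem_erase hy, (ne_of_mem_erase hy).symm]) (by simp [ne_of_mem_erase hz, (ne_of_mem_erase hz).symm])
        (by simp [ne_of_mem_erase hw, (ne_of_mem_erase hw).symm]) (by simp [hyz, Ne.symm hyz]) (by simp [hyw, Ne.symm hyw]) (by simp [hzw, Ne.symm hzw])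
end

section
/- If F ⊆ 2^{[7]} contains no 3 pairwise disjoint members, then |F| ≤ 2^7 - 23, i.e., at least 1 + C(7,1) + C(6,2) = 23 subsets of [7] are missing from F. -/
theorem stmt_9 (F : Finset (Finset (Fin 7)))
    (h : ¬ ∃ S : Finset (Finset (Fin 7)),
        S ⊆ F ∧ S.card = 3 ∧ (S : Set (Finset (Fin 7))).Pairwise Disjoint) :
    F.card ≤ 2 ^ 7 - 23 := by
  have no3 : ∀ a b c : Finset (Fin 7), a ∈ F → b ∈ F → c ∈ F → a ≠ b → a ≠ c → b ≠ c →
      Disjoint a b → Disjoint a c → Disjoint b c → False := by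
    intro a b c ha hb hc hab hac hbc dab dac dbc
    refine h ⟨{a, b, c}, ?_, ?_, ?_⟩
    · intro x hx
      simp only [Finset.mem_insert, Finset.mem_singleton] at hx
      rcases hx with rfl | rfl | rfl <;> assumption
    · rw [Finset.card_insert_of_notMem (by simp [hab, hac]),
        Finset.card_insert_of_notMem (by simp [hbc]), Finset.card_singleton]
    · intro x hx y hy hxy
      simp only [Finset.coe_insert, Set.mem_insert_iff, Finset.coe_singleton,
        Set.mem_singleton_iff] at hx hy
      rcases hx with rfl | rfl | rfl <;> rcases hy with rfl | rfl | rfl <;>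
        first
          | exact absurd rfl hxy
          | exact dab | exact dac | exact dbc
          | exact dab.symm | exact dac.symm | exact dbc.symm
  have nedis : ∀ a b : Finset (Fin 7), Disjoint a b → a.Nonempty → a ≠ b := by
    intro a b d hne heq
    subst heq
    exact hne.ne_empty (by simpa using disjoint_self.mp d)
  have goal105 : F.card ≤ 105 → F.card ≤ 2 ^ 7 - 23 := by intro hh; omega
  apply goal105
  by_cases hem : (∅ : Finset (Fin 7)) ∈ F
  · -- Case 1 : F is intersecting away from ∅, univ
    set F2 : Finset (Finset (Fin 7)) := (F.erase ∅).erase Finset.univ with hF2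
    have hmem : ∀ A ∈ F2, A ∈ F ∧ A ≠ ∅ ∧ A ≠ Finset.univ := by
      intro A hA
      simp only [hF2, Finset.mem_erase] at hA
      exact ⟨hA.2.2, hA.2.1, hA.1⟩
    have himg : ∀ B ∈ F2, B ∉ F2.image compl := by
      intro B hB hBim
      obtain ⟨A, hA, rfl⟩ := Finset.mem_image.mp hBim
      obtain ⟨hAF, hA0, hAu⟩ := hmem A hA
      obtain ⟨hAcF, hAc0, hAcu⟩ := hmem Aᶜ hB
      refine no3 ∅ A Aᶜ hem hAF hAcF (fun e => hA0 e.symm) (fun e => hAc0 e.symm)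
        ?_ (by simp) (by simp) disjoint_compl_right
      intro e
      have d : Disjoint A Aᶜ := disjoint_compl_right
      rw [← e] at d
      exact hA0 (by simpa using disjoint_self.mp d)
    have hdisj : Disjoint F2 (F2.image compl) := by
      rw [Finset.disjoint_left]; exact himg
    have hinj : (F2.image compl).card = F2.card :=
      Finset.card_image_of_injective _ compl_injective
    have h128 : F2.card + F2.card ≤ 128 := by
      calc F2.card + F2.card = (F2 ∪ F2.image compl).card := by
            rw [Finset.card_union_of_disjoint hdisj, hinj]
        _ ≤ (Finset.univ : Finset (Finset (Fin 7))).card := Finset.card_le_univ _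
        _ = 128 := by simp [Fintype.card_finset]
    have hsub : F ⊆ insert ∅ (insert Finset.univ F2) := by
      intro A hA
      by_cases h0 : A = ∅
      · simp [h0]
      by_cases hu : A = Finset.univ
      · simp [hu]
      · simp [hF2, Finset.mem_insert, Finset.mem_erase, h0, hu, hA]
    have := Finset.card_le_card hsub
    have h1 := Finset.card_insert_le (∅ : Finset (Fin 7)) (insert Finset.univ F2)
    have h2 := Finset.card_insert_le (Finset.univ : Finset (Fin 7)) F2
    omega
  by_cases hsing : ∃ x : Fin 7, ({x} : Finset (Fin 7)) ∈ F
  · -- Case 2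
    obtain ⟨x, hx⟩ := hsing
    set S : Finset (Fin 7) := ({x} : Finset (Fin 7))ᶜ with hSdef
    have hxS : x ∉ S := by simp [hSdef]
    have hScard : S.card = 6 := by
      simp [hSdef, Finset.card_compl]
    set G : Finset (Finset (Fin 7)) := S.powerset.filter (· ∈ F) with hGdef
    have hGmem : ∀ A ∈ G, A ⊆ S ∧ A ∈ F := by
      intro A hA
      simp only [hGdef, Finset.mem_filter, Finset.mem_powerset] at hA
      exact hA
    have himg : ∀ A ∈ G, S \ A ∉ G := by
      intro A hA hSA
      obtain ⟨hAS, hAF⟩ := hGmem A hA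
      obtain ⟨hSAS, hSAF⟩ := hGmem _ hSA
      have dAS : Disjoint A (S \ A) := Finset.disjoint_sdiff
      have hxA : ({x} : Finset (Fin 7)) ≠ A := by
        intro e; exact hxS (hAS (by rw [← e]; exact Finset.mem_singleton_self x))
      have hxSA : ({x} : Finset (Fin 7)) ≠ S \ A := by
        intro e; exact hxS (hSAS (by rw [← e]; exact Finset.mem_singleton_self x))
      have hASA : A ≠ S \ A := by
        intro e
        have d : Disjoint A A := by nth_rewrite 2 [e]; exact dAS
        have hA0 : A = ∅ := by simpa using disjoint_self.mp d
        have hS0 : S \ A = ∅ := e.symm.trans hA0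
        have hsub : S ⊆ A := Finset.sdiff_eq_empty_iff_subset.mp hS0
        have := Finset.card_le_card hsub
        rw [hA0, Finset.card_empty] at this
        omega
      refine no3 {x} A (S \ A) hx hAF hSAF hxA hxSA hASA ?_ ?_ dAS
      · rw [Finset.disjoint_singleton_left]; exact fun hc => hxS (hAS hc)
      · rw [Finset.disjoint_singleton_left]; exact fun hc => hxS (hSAS hc)
    have hdisj : Disjoint G (G.image (S \ ·)) := by
      rw [Finset.disjoint_left]
      intro B hB hBim
      obtain ⟨A, hA, rfl⟩ := Finset.mem_image.mp hBim
      exact himg A hA hB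
    have hinj : (G.image (S \ ·)).card = G.card := by
      apply Finset.card_image_of_injOn
      intro A hA B hB hAB
      have hAS := (hGmem A hA).1
      have hBS := (hGmem B hB).1
      have := congrArg (S \ ·) hAB
      simpa [Finset.sdiff_sdiff_eq_self hAS, Finset.sdiff_sdiff_eq_self hBS] using this
    have hG32 : G.card + G.card ≤ 64 := by
      calc G.card + G.card = (G ∪ G.image (S \ ·)).card := by
            rw [Finset.card_union_of_disjoint hdisj, hinj]
        _ ≤ S.powerset.card := by
            apply Finset.card_le_card
            intro B hB
            rcases Finset.mem_union.mp hB with hB | hB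
            · exact Finset.mem_powerset.mpr (hGmem B hB).1
            · obtain ⟨A, hA, rfl⟩ := Finset.mem_image.mp hB
              exact Finset.mem_powerset.mpr (Finset.sdiff_subset)
        _ = 64 := by rw [Finset.card_powerset, hScard]; norm_num
    -- split F by ⊆ S
    have hsplit := Finset.card_filter_add_card_filter_not
      (s := F) (p := fun A => A ⊆ S)
    have hFS : (F.filter (fun A => A ⊆ S)).card ≤ G.card := by
      apply Finset.card_le_card
      intro A hA
      simp only [Finset.mem_filter] at hA
      simp only [hGdef, Finset.mem_filter, Finset.mem_powerset]
      exact ⟨hA.2, hA.1⟩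
    have hFnS : (F.filter (fun A => ¬ A ⊆ S)).card ≤ 64 := by
      have : (F.filter (fun A => ¬ A ⊆ S)).card ≤ S.powerset.card := by
        apply Finset.card_le_card_of_injOn (fun A => A.erase x)
        · intro A hA
          simp only [Finset.mem_coe, Finset.mem_filter] at hA
          rw [Finset.mem_coe, Finset.mem_powerset]
          intro t ht
          rw [Finset.mem_erase] at ht
          simp [hSdef, ht.1]
        · intro A hA B hB hAB
          simp only [Finset.mem_coe, Finset.mem_filter] at hA hB
          have hxA : x ∈ A := by
            obtain ⟨t, htA, htS⟩ := Finset.not_subset.mp hA.2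
            have : t = x := by
              by_contra hc
              exact htS (by simp [hSdef, hc])
            rwa [← this]
          have hxB : x ∈ B := by
            obtain ⟨t, htB, htS⟩ := Finset.not_subset.mp hB.2
            have : t = x := by
              by_contra hc
              exact htS (by simp [hSdef, hc])
            rwa [← this]
          have := congrArg (insert x) hAB
          simpa [Finset.insert_erase hxA, Finset.insert_erase hxB] using this
      rw [Finset.card_powerset, hScard] at this
      exact this
    omega
  push_neg at hsing
  -- Case 3
  set P : Finset (Finset (Fin 7)) := F.filter (fun A => A.card = 2) with hPdef
  set Q : Finset (Finset (Fin 7)) := F.filter (fun A => A.card = 3) with hQdef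
  set R : Finset (Finset (Fin 7)) := F.filter (fun A => ¬ A.card = 2 ∧ ¬ A.card = 3) with hRdef
  have hcard7 : ∀ A : Finset (Fin 7), A.card ≤ 7 := fun A => by
    simpa using Finset.card_le_univ A
  have hsplitF : F.card = P.card + Q.card + R.card := by
    have d1 : Disjoint P Q := by
      rw [Finset.disjoint_left]; intro A ha hb
      simp only [hPdef, hQdef, Finset.mem_filter] at ha hb; omega
    have d2 : Disjoint (P ∪ Q) R := by
      rw [Finset.disjoint_left]; intro A ha hb
      simp only [hRdef, Finset.mem_filter] at hb
      rcases Finset.mem_union.mp ha with ha | ha <;>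
        simp only [hPdef, hQdef, Finset.mem_filter] at ha
      · exact hb.2.1 ha.2
      · exact hb.2.2 ha.2
    have hU : P ∪ Q ∪ R = F := by
      ext A
      simp only [Finset.mem_union, hPdef, hQdef, hRdef, Finset.mem_filter]
      constructor
      · rintro ((⟨hA, _⟩ | ⟨hA, _⟩) | ⟨hA, _⟩) <;> exact hA
      · intro hA
        by_cases h2 : A.card = 2
        · exact Or.inl (Or.inl ⟨hA, h2⟩)
        by_cases h3 : A.card = 3
        · exact Or.inl (Or.inr ⟨hA, h3⟩)
        · exact Or.inr ⟨hA, h2, h3⟩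
    rw [← hU, Finset.card_union_of_disjoint d2, Finset.card_union_of_disjoint d1]
  have hT35card : (Finset.univ.powersetCard 3 : Finset (Finset (Fin 7))).card = 35 := by
    rw [Finset.card_powersetCard, Finset.card_univ, Fintype.card_fin]; decide
  have hRbound : R.card ≤ 64 := by
    have hU3card : (((Finset.univ.powersetCard 0 ∪ Finset.univ.powersetCard 1) ∪
        Finset.univ.powersetCard 2) ∪ Finset.univ.powersetCard 3 :
        Finset (Finset (Fin 7))).card ≤ 64 := by
      have c0 : (Finset.univ.powersetCard 0 : Finset (Finset (Fin 7))).card = 1 := by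
        rw [Finset.card_powersetCard, Finset.card_univ, Fintype.card_fin]; decide
      have c1 : (Finset.univ.powersetCard 1 : Finset (Finset (Fin 7))).card = 7 := by
        rw [Finset.card_powersetCard, Finset.card_univ, Fintype.card_fin]; decide
      have c2 : (Finset.univ.powersetCard 2 : Finset (Finset (Fin 7))).card = 21 := by
        rw [Finset.card_powersetCard, Finset.card_univ, Fintype.card_fin]; decide
      have u1 := Finset.card_union_le (Finset.univ.powersetCard 0 : Finset (Finset (Fin 7)))
        (Finset.univ.powersetCard 1)
      have u2 := Finset.card_union_le ((Finset.univ.powersetCard 0 ∪ Finset.univ.powersetCard 1 :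
        Finset (Finset (Fin 7)))) (Finset.univ.powersetCard 2)
      have u3 := Finset.card_union_le (((Finset.univ.powersetCard 0 ∪ Finset.univ.powersetCard 1) ∪
        Finset.univ.powersetCard 2 : Finset (Finset (Fin 7)))) (Finset.univ.powersetCard 3)
      omega
    have hmap : R.card ≤ (((Finset.univ.powersetCard 0 ∪ Finset.univ.powersetCard 1) ∪
        Finset.univ.powersetCard 2) ∪ Finset.univ.powersetCard 3 :
        Finset (Finset (Fin 7))).card := by
      apply Finset.card_le_card_of_injOn (fun A => Aᶜ)
      · intro A hA
        simp only [hRdef, Finset.mem_coe, Finset.mem_filter] at hA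
        obtain ⟨hAF, h2, h3⟩ := hA
        have h0 : A.card ≠ 0 := by
          intro e'; exact hem (Finset.card_eq_zero.mp e' ▸ hAF)
        have h1 : A.card ≠ 1 := by
          intro e'; obtain ⟨y, rfl⟩ := Finset.card_eq_one.mp e'; exact hsing y hAF
        have h7 := hcard7 A
        have hcc : Aᶜ.card = 7 - A.card := by rw [Finset.card_compl, Fintype.card_fin]
        have hcases : Aᶜ.card = 0 ∨ Aᶜ.card = 1 ∨ Aᶜ.card = 2 ∨ Aᶜ.card = 3 := by omega
        simp only [Finset.mem_coe, Finset.mem_union, Finset.mem_powersetCard]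
        rcases hcases with hc' | hc' | hc' | hc' <;> simp [hc', Finset.subset_univ]
      · exact fun A _ B _ hAB => compl_injective hAB
    omega
  have hPmem : ∀ p ∈ P, p ∈ F ∧ p.card = 2 := by
    intro p hp; simpa [hPdef, Finset.mem_filter] using hp
  have hQsub : Q ⊆ Finset.univ.powersetCard 3 := by
    intro A hA; simp only [hQdef, Finset.mem_filter] at hA
    exact Finset.mem_powersetCard.mpr ⟨Finset.subset_univ _, hA.2⟩
  have hQ35 : Q.card ≤ 35 := by
    have := Finset.card_le_card hQsub; rwa [hT35card] at this
  have hPQ : P.card + Q.card ≤ 41 := by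
    by_cases hM : ∃ e ∈ P, ∃ f ∈ P, e ≠ f ∧ Disjoint e f
    · -- matching case
      obtain ⟨e, he, f, hf, hef, hdef⟩ := hM
      have he2 := (hPmem e he).2
      have hf2 := (hPmem f hf).2
      have heF := (hPmem e he).1
      have hfF := (hPmem f hf).1
      set K : Finset (Fin 7) := e ∪ f with hKdef
      have hK4 : K.card = 4 := by
        rw [hKdef, Finset.card_union_of_disjoint hdef, he2, hf2]
      set PK : Finset (Finset (Fin 7)) := P.filter (fun p => p ⊆ K) with hPKdef
      set PR : Finset (Finset (Fin 7)) := P.filter (fun p => ¬ p ⊆ K) with hPRdef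
      have hsplitP : PK.card + PR.card = P.card :=
        Finset.card_filter_add_card_filter_not (p := fun p => p ⊆ K)
      have hPK6 : PK.card ≤ 6 := by
        have hsub : PK ⊆ Finset.powersetCard 2 K := by
          intro p hp
          simp only [hPKdef, Finset.mem_filter] at hp
          exact Finset.mem_powersetCard.mpr ⟨hp.2, (hPmem p hp.1).2⟩
        have := Finset.card_le_card hsub
        rw [Finset.card_powersetCard, hK4] at this
        exact this.trans (by decide)
      have honeside : ∀ p ∈ PR,
          (Disjoint p f ∧ ¬ Disjoint p e) ∨ (Disjoint p e ∧ ¬ Disjoint p f) := by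
        intro p hp
        simp only [hPRdef, Finset.mem_filter] at hp
        obtain ⟨hpP, hpK⟩ := hp
        have hp2 := (hPmem p hpP).2
        have hpF := (hPmem p hpP).1
        have hnotboth : ¬ (Disjoint p e ∧ Disjoint p f) := by
          rintro ⟨dd1, dd2⟩
          have hpne : p.Nonempty := Finset.card_pos.mp (by omega)
          have hene : e.Nonempty := Finset.card_pos.mp (by omega)
          exact no3 p e f hpF heF hfF (nedis p e dd1 hpne) (nedis p f dd2 hpne)
            (nedis e f hdef hene) dd1 dd2 hdef
        have hnotneither : Disjoint p e ∨ Disjoint p f := by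
          by_contra hc
          push_neg at hc
          obtain ⟨z, hz⟩ := Finset.not_disjoint_iff.mp hc.1
          obtain ⟨w, hw⟩ := Finset.not_disjoint_iff.mp hc.2
          obtain ⟨r, hrp, hrK⟩ := Finset.not_subset.mp hpK
          have hzw : z ≠ w := fun e' => (Finset.disjoint_left.mp hdef (e' ▸ hz.2)) hw.2
          have hrz : r ≠ z := fun e' => hrK (by rw [e', hKdef]; exact Finset.mem_union_left f hz.2)
          have hrw : r ≠ w := fun e' => hrK (by rw [e', hKdef]; exact Finset.mem_union_right e hw.2)
          have hsub3 : ({r, z, w} : Finset (Fin 7)) ⊆ p := by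
            intro t ht
            simp only [Finset.mem_insert, Finset.mem_singleton] at ht
            rcases ht with rfl | rfl | rfl
            · exact hrp
            · exact hz.1
            · exact hw.1
          have h3 : ({r, z, w} : Finset (Fin 7)).card = 3 := by
            rw [Finset.card_insert_of_notMem (by simp [hrz, hrw]),
              Finset.card_insert_of_notMem (by simp [hzw]), Finset.card_singleton]
          have := Finset.card_le_card hsub3
          omega
        rcases hnotneither with hd | hd
        · exact Or.inr ⟨hd, fun hd2 => hnotboth ⟨hd, hd2⟩⟩
        · exact Or.inl ⟨hd, fun hd2 => hnotboth ⟨hd2, hd⟩⟩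
      have himgsub : ∀ p ∈ PR,
          (p ∪ (if Disjoint p f then f else e))ᶜ ∈ (Finset.univ.powersetCard 3) \ Q := by
        intro p hp
        have hside := honeside p hp
        simp only [hPRdef, Finset.mem_filter] at hp
        obtain ⟨hpP, hpK⟩ := hp
        have hp2 := (hPmem p hpP).2
        have hpF := (hPmem p hpP).1
        obtain ⟨dpg, hgF, hg2⟩ : Disjoint p (if Disjoint p f then f else e) ∧
            (if Disjoint p f then f else e) ∈ F ∧ (if Disjoint p f then f else e).card = 2 := by
          rcases hside with ⟨dd1, dd2⟩ | ⟨dd1, dd2⟩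
          · rw [if_pos dd1]; exact ⟨dd1, hfF, hf2⟩
          · rw [if_neg dd2]; exact ⟨dd1, heF, he2⟩
        set g : Finset (Fin 7) := if Disjoint p f then f else e with hgdef
        have hug : (p ∪ g).card = 4 := by rw [Finset.card_union_of_disjoint dpg, hp2, hg2]
        have hc3 : (p ∪ g)ᶜ.card = 3 := by
          rw [Finset.card_compl, Fintype.card_fin, hug]
        rw [Finset.mem_sdiff]
        refine ⟨Finset.mem_powersetCard.mpr ⟨Finset.subset_univ _, hc3⟩, ?_⟩
        intro hcQ
        simp only [hQdef, Finset.mem_filter] at hcQ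
        have dd1 : Disjoint p (p ∪ g)ᶜ :=
          Disjoint.mono_left Finset.subset_union_left disjoint_compl_right
        have dd2 : Disjoint g (p ∪ g)ᶜ :=
          Disjoint.mono_left Finset.subset_union_right disjoint_compl_right
        have hpne : p.Nonempty := Finset.card_pos.mp (by omega)
        have hgne : g.Nonempty := Finset.card_pos.mp (by omega)
        exact no3 p g (p ∪ g)ᶜ hpF hgF hcQ.1 (nedis p g dpg hpne) (nedis p _ dd1 hpne)
          (nedis g _ dd2 hgne) dpg dd1 dd2
      have hinj : Set.InjOn (fun p => (p ∪ (if Disjoint p f then f else e))ᶜ) PR := by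
        intro p hp q hq hpq
        have hsp := honeside p hp
        have hsq := honeside q hq
        simp only [Finset.mem_coe, hPRdef, Finset.mem_filter] at hp hq
        have hp2 := (hPmem p hp.1).2
        have hq2 := (hPmem q hq.1).2
        have hpq' : p ∪ (if Disjoint p f then f else e) = q ∪ (if Disjoint q f then f else e) :=
          compl_injective hpq
        have same : ∀ (g : Finset (Fin 7)), Disjoint p g → Disjoint q g →
            p ∪ g = q ∪ g → p = q := by
          intro g dd1 dd2 hu
          have hsub : p ⊆ q := by
            intro t ht
            have htq : t ∈ q ∪ g := by rw [← hu]; exact Finset.mem_union_left _ ht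
            rcases Finset.mem_union.mp htq with h' | h'
            · exact h'
            · exact absurd h' (Finset.disjoint_left.mp dd1 ht)
          exact Finset.eq_of_subset_of_card_le hsub (by rw [hp2, hq2])
        rcases hsp with ⟨dd1, dd2⟩ | ⟨dd1, dd2⟩ <;> rcases hsq with ⟨ee1, ee2⟩ | ⟨ee1, ee2⟩
        · rw [if_pos dd1, if_pos ee1] at hpq'; exact same f dd1 ee1 hpq'
        · rw [if_pos dd1, if_neg ee2] at hpq'
          exfalso
          have hfq : f ⊆ q := by
            intro t ht
            have htq : t ∈ q ∪ e := by rw [← hpq']; exact Finset.mem_union_right _ ht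
            rcases Finset.mem_union.mp htq with h' | h'
            · exact h'
            · exact absurd ht (Finset.disjoint_left.mp hdef h')
          have hqf : q = f := (Finset.eq_of_subset_of_card_le hfq (by rw [hf2, hq2])).symm
          exact hq.2 (by rw [hqf, hKdef]; exact Finset.subset_union_right)
        · rw [if_neg dd2, if_pos ee1] at hpq'
          exfalso
          have heq : e ⊆ q := by
            intro t ht
            have htq : t ∈ q ∪ f := by rw [← hpq']; exact Finset.mem_union_right _ ht
            rcases Finset.mem_union.mp htq with h' | h'
            · exact h'
            · exact absurd h' (Finset.disjoint_left.mp hdef ht)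
          have hqe : q = e := (Finset.eq_of_subset_of_card_le heq (by rw [he2, hq2])).symm
          exact hq.2 (by rw [hqe, hKdef]; exact Finset.subset_union_left)
        · rw [if_neg dd2, if_neg ee2] at hpq'; exact same e dd1 ee1 hpq'
      have hPRbound := Finset.card_le_card_of_injOn _ himgsub hinj
      rw [Finset.card_sdiff_of_subset hQsub, hT35card] at hPRbound
      omega
    · -- intersecting case
      push_neg at hM
      have hM' : ∀ p ∈ P, ∀ q ∈ P, p ≠ q → ¬ Disjoint p q := by
        intro p hp q hq hne hd
        exact (hM p hp q hq hne) hd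
      have hP6 : P.card ≤ 6 := by
        rcases le_or_gt P.card 1 with h1 | h1
        · omega
        obtain ⟨e, he, f, hf, hef⟩ := Finset.one_lt_card.mp h1
        obtain ⟨v, hve, hvf⟩ := Finset.not_disjoint_iff.mp (hM' e he f hf hef)
        have pairform : ∀ g : Finset (Fin 7), g.card = 2 → v ∈ g →
            ∃ a, a ≠ v ∧ g = {v, a} := by
          intro g hg2 hvg
          have hce : (g.erase v).card = 1 := by
            rw [Finset.card_erase_of_mem hvg, hg2]
          obtain ⟨a, ha⟩ := Finset.card_eq_one.mp hce
          have hav : a ≠ v := by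
            have : a ∈ g.erase v := by rw [ha]; exact Finset.mem_singleton_self a
            exact (Finset.mem_erase.mp this).1
          refine ⟨a, hav, ?_⟩
          rw [← Finset.insert_erase hvg, ha]
        obtain ⟨a, hav, hea⟩ := pairform e (hPmem e he).2 hve
        obtain ⟨b, hbv, hfb⟩ := pairform f (hPmem f hf).2 hvf
        have hab : a ≠ b := by
          intro e'; apply hef; rw [hea, hfb, e']
        by_cases hstar : ∀ g ∈ P, v ∈ g
        · have hPle : P.card ≤ (Finset.powersetCard 1 (({v} : Finset (Fin 7))ᶜ)).card := by
            apply Finset.card_le_card_of_injOn (fun g => g.erase v)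
            · intro g hg
              rw [Finset.mem_coe, Finset.mem_powersetCard]
              constructor
              · intro t ht
                simp only [Finset.mem_compl, Finset.mem_singleton]
                exact (Finset.mem_erase.mp ht).1
              · rw [Finset.card_erase_of_mem (hstar g hg), (hPmem g hg).2]
            · intro g hg g' hg' hgg'
              have e1 := Finset.insert_erase (hstar g hg)
              have e2 := Finset.insert_erase (hstar g' hg')
              rw [← e1, ← e2]
              simp only at hgg'
              rw [hgg']
          have hc6 : (Finset.powersetCard 1 (({v} : Finset (Fin 7))ᶜ)).card = 6 := by
            rw [Finset.card_powersetCard, Finset.card_compl, Finset.card_singleton,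
              Fintype.card_fin]
            decide
          omega
        · push_neg at hstar
          obtain ⟨g, hgP, hvg⟩ := hstar
          have hg2 := (hPmem g hgP).2
          have hge : g ≠ e := by
            intro e'; rw [e', hea] at hvg; exact hvg (Finset.mem_insert_self v _)
          have hgf : g ≠ f := by
            intro e'; rw [e', hfb] at hvg; exact hvg (Finset.mem_insert_self v _)
          have hag : a ∈ g := by
            obtain ⟨z, hz1, hz2⟩ := Finset.not_disjoint_iff.mp (hM' g hgP e he hge)
            rw [hea] at hz2
            rcases Finset.mem_insert.mp hz2 with rfl | h'
            · exact absurd hz1 hvg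
            · rwa [← Finset.mem_singleton.mp h']
          have hbg : b ∈ g := by
            obtain ⟨z, hz1, hz2⟩ := Finset.not_disjoint_iff.mp (hM' g hgP f hf hgf)
            rw [hfb] at hz2
            rcases Finset.mem_insert.mp hz2 with rfl | h'
            · exact absurd hz1 hvg
            · rwa [← Finset.mem_singleton.mp h']
          have hgab : g = {a, b} := by
            refine (Finset.eq_of_subset_of_card_le ?_ ?_).symm
            · intro t ht
              rcases Finset.mem_insert.mp ht with rfl | ht'
              · exact hag
              · rw [Finset.mem_singleton.mp ht']; exact hbg
            · rw [hg2, Finset.card_insert_of_notMem (by simp [hab]), Finset.card_singleton]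
          have hsub : P ⊆ Finset.powersetCard 2 ({v, a, b} : Finset (Fin 7)) := by
            intro p hp
            rw [Finset.mem_powersetCard]
            refine ⟨?_, (hPmem p hp).2⟩
            intro t htp
            by_contra htv
            simp only [Finset.mem_insert, Finset.mem_singleton] at htv
            push_neg at htv
            obtain ⟨htv1, htv2, htv3⟩ := htv
            have hpe : p ≠ e := by
              intro e'; rw [e', hea] at htp
              rcases Finset.mem_insert.mp htp with h' | h'
              · exact htv1 h'
              · exact htv2 (Finset.mem_singleton.mp h')
            have hpf : p ≠ f := by
              intro e'; rw [e', hfb] at htp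
              rcases Finset.mem_insert.mp htp with h' | h'
              · exact htv1 h'
              · exact htv3 (Finset.mem_singleton.mp h')
            have hpg : p ≠ g := by
              intro e'; rw [e', hgab] at htp
              rcases Finset.mem_insert.mp htp with h' | h'
              · exact htv2 h'
              · exact htv3 (Finset.mem_singleton.mp h')
            obtain ⟨s, hps, hst⟩ : ∃ s, p = {t, s} ∧ s ≠ t := by
              obtain ⟨s', hs'⟩ := Finset.card_eq_one.mp
                (by rw [Finset.card_erase_of_mem htp, (hPmem p hp).2] :
                  (p.erase t).card = 1)
              refine ⟨s', ?_, ?_⟩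
              · rw [← Finset.insert_erase htp, hs']
              · have : s' ∈ p.erase t := by rw [hs']; exact Finset.mem_singleton_self s'
                exact (Finset.mem_erase.mp this).1
            have hget : ∀ q ∈ P, p ≠ q → (∀ u ∈ q, u ≠ t) → s ∈ q := by
              intro q hq hpq hqt
              obtain ⟨z, hz1, hz2⟩ := Finset.not_disjoint_iff.mp (hM' p hp q hq hpq)
              rw [hps] at hz1
              rcases Finset.mem_insert.mp hz1 with rfl | h'
              · exact absurd rfl (hqt z hz2)
              · rwa [← Finset.mem_singleton.mp h']
            have hse : s ∈ e := by
              refine hget e he hpe ?_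
              intro u hu
              rw [hea] at hu
              rcases Finset.mem_insert.mp hu with rfl | h'
              · exact fun e' => htv1 e'.symm
              · rw [Finset.mem_singleton.mp h']; exact fun e' => htv2 e'.symm
            have hsf : s ∈ f := by
              refine hget f hf hpf ?_
              intro u hu
              rw [hfb] at hu
              rcases Finset.mem_insert.mp hu with rfl | h'
              · exact fun e' => htv1 e'.symm
              · rw [Finset.mem_singleton.mp h']; exact fun e' => htv3 e'.symm
            have hsg : s ∈ g := by
              refine hget g hgP hpg ?_
              intro u hu
              rw [hgab] at hu
              rcases Finset.mem_insert.mp hu with rfl | h'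
              · exact fun e' => htv2 e'.symm
              · rw [Finset.mem_singleton.mp h']; exact fun e' => htv3 e'.symm
            rw [hea] at hse
            rcases Finset.mem_insert.mp hse with rfl | h'
            · exact hvg hsg
            · rw [Finset.mem_singleton.mp h'] at hsf
              rw [hfb] at hsf
              rcases Finset.mem_insert.mp hsf with h'' | h''
              · exact hav h''
              · exact hab (Finset.mem_singleton.mp h'')
          have hcard3 : ({v, a, b} : Finset (Fin 7)).card ≤ 3 := by
            apply le_trans (Finset.card_insert_le _ _)
            have := Finset.card_insert_le a ({b} : Finset (Fin 7))
            simp only [Finset.card_singleton] at this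
            omega
          have := Finset.card_le_card hsub
          rw [Finset.card_powersetCard] at this
          have hch := Nat.choose_le_choose 2 hcard3
          have : (3 : ℕ).choose 2 = 3 := rfl
          omega
      omega
  omega
end

section
/- For every integer m ≥ 1, with n = 3m+1: C(n, m-2) + C(n, m-1) ≤ (1/4) · C(n, m+2). -/
theorem stmt_14 (m : ℕ) (hm : 1 ≤ m) :
    (if 2 ≤ m then ((3 * m + 1).choose (m - 2) : ℚ) else 0) +
        ((3 * m + 1).choose (m - 1) : ℚ) ≤
      (1 / 4) * ((3 * m + 1).choose (m + 2) : ℚ) := by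
  rcases Nat.lt_or_ge m 2 with h2 | h2
  · interval_cases m
    · norm_num
  · obtain ⟨k, rfl⟩ : ∃ k, m = k + 2 := ⟨m - 2, by omega⟩
    rw [if_pos h2]
    have e1 : k + 2 - 2 = k := by omega
    have e2 : k + 2 - 1 = k + 1 := by omega
    have en : 3 * (k + 2) + 1 = 3 * k + 7 := by omega
    rw [e1, e2, en]
    have e3 : k + 2 + 2 = k + 4 := by omega
    rw [e3]
    set n := 3 * k + 7 with hn
    have r : ∀ j, (n.choose (j + 1) : ℚ) * (j + 1) = (n.choose j : ℚ) * ((n - j : ℕ) : ℚ) := by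
      intro j
      exact_mod_cast congrArg (Nat.cast (R := ℚ)) (Nat.choose_succ_right_eq n j)
    have h1 := r k
    have h2' := r (k + 1)
    have h3 := r (k + 2)
    have h4 := r (k + 3)
    have s0 : (n - k : ℕ) = 2 * k + 7 := by omega
    have s1 : (n - (k + 1) : ℕ) = 2 * k + 6 := by omega
    have s2 : (n - (k + 2) : ℕ) = 2 * k + 5 := by omega
    have s3 : (n - (k + 3) : ℕ) = 2 * k + 4 := by omega
    rw [s0] at h1; rw [s1] at h2'; rw [s2] at h3; rw [s3] at h4
    push_cast at h1 h2' h3 h4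
    set K : ℚ := (k : ℚ) with hK
    set c0 : ℚ := (n.choose k : ℚ)
    set c1 : ℚ := (n.choose (k + 1) : ℚ)
    simp only [show k + 1 + 1 = k + 2 from rfl, show k + 2 + 1 = k + 3 from rfl,
      show k + 3 + 1 = k + 4 from rfl] at h2' h3 h4
    set c4 : ℚ := (n.choose (k + 4) : ℚ)
    set c2 : ℚ := (n.choose (k + 2) : ℚ)
    set c3 : ℚ := (n.choose (k + 3) : ℚ)
    have hkq : (0:ℚ) ≤ K := by rw [hK]; positivity
    have hc4 : (0:ℚ) ≤ c4 := by positivity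
    have key : 4 * (2*K+5) * (2*K+7) * (K+3) * (c0 + c1)
        = (K+3) * (K+4) * (3*K+8) * c4 := by
      linear_combination (-4*(2*K+5)*(K+3)) * h1 + (-2*(2*K+5)*(3*K+8)) * h2'
        + (-2*(K+2)*(3*K+8)) * h3 + (-(K+3)*(3*K+8)) * h4
    have hpos : (0:ℚ) < 4 * (2*K+5) * (2*K+7) * (K+3) := by positivity
    refine (mul_le_mul_iff_right₀ hpos).mp ?_
    nlinarith [key, hc4, hkq, mul_nonneg hkq hc4, mul_nonneg (mul_nonneg hkq hkq) hc4,
      mul_nonneg (mul_nonneg (mul_nonneg hkq hkq) hkq) hc4]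
end

section
/- For every integer m ≥ 3, with n = 3m+1: 2·C(n, m-2) + 2·C(n, m-1) ≤ C(n, m+3). -/
theorem stmt_15 (m : ℕ) (hm : 3 ≤ m) :
    2 * (3 * m + 1).choose (m - 2) + 2 * (3 * m + 1).choose (m - 1) ≤
      (3 * m + 1).choose (m + 3) := by
  obtain ⟨a, rfl⟩ : ∃ a, m = a + 3 := ⟨m - 3, by omega⟩
  set n := 3 * (a + 3) + 1 with hn
  have hsub : ∀ k, k ≤ a + 6 → n - k = 3 * a + 10 - k := by intro k hk; omega
  have key : ∀ k, n.choose (k + 1) * (k + 1) = n.choose k * (n - k) :=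
    fun k => Nat.choose_succ_right_eq n k
  have h1 := key (a + 1)
  have h2 := key (a + 2)
  have h3 := key (a + 3)
  have h4 := key (a + 4)
  have h5 := key (a + 5)
  have e1 : n - (a + 1) = 2 * a + 9 := by omega
  have e2 : n - (a + 2) = 2 * a + 8 := by omega
  have e3 : n - (a + 3) = 2 * a + 7 := by omega
  have e4 : n - (a + 4) = 2 * a + 6 := by omega
  have e5 : n - (a + 5) = 2 * a + 5 := by omega
  rw [e1] at h1; rw [e2] at h2; rw [e3] at h3; rw [e4] at h4; rw [e5] at h5
  have hpos : ∀ k, k ≤ a + 6 → 0 < n.choose k := by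
    intro k hk; exact Nat.choose_pos (by omega)
  -- c(a+1) ≤ c(a+2)
  have hle : n.choose (a + 1) ≤ n.choose (a + 2) := by
    have : n.choose (a + 1) * (a + 2) ≤ n.choose (a + 2) * (a + 2) := by
      calc n.choose (a + 1) * (a + 2) ≤ n.choose (a + 1) * (2 * a + 9) :=
            Nat.mul_le_mul_left _ (by omega)
        _ = n.choose (a + 2) * (a + 2) := h1.symm
    exact Nat.le_of_mul_le_mul_right this (by omega)
  -- c(a+6) * D = c(a+2) * N
  have hchain : n.choose (a + 6) * ((a + 3) * (a + 4) * (a + 5) * (a + 6)) =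
      n.choose (a + 2) * ((2 * a + 8) * (2 * a + 7) * (2 * a + 6) * (2 * a + 5)) := by
    have c3 : a + 2 + 1 = a + 3 := by omega
    have c4 : a + 3 + 1 = a + 4 := by omega
    have c5 : a + 4 + 1 = a + 5 := by omega
    have c6 : a + 5 + 1 = a + 6 := by omega
    rw [c3] at h2; rw [c4] at h3; rw [c5] at h4; rw [c6] at h5
    calc n.choose (a + 6) * ((a + 3) * (a + 4) * (a + 5) * (a + 6))
        = (n.choose (a + 6) * (a + 6)) * ((a + 3) * (a + 4) * (a + 5)) := by ring
      _ = (n.choose (a + 5) * (2 * a + 5)) * ((a + 3) * (a + 4) * (a + 5)) := by rw [h5]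
      _ = (n.choose (a + 5) * (a + 5)) * ((a + 3) * (a + 4) * (2 * a + 5)) := by ring
      _ = (n.choose (a + 4) * (2 * a + 6)) * ((a + 3) * (a + 4) * (2 * a + 5)) := by rw [h4]
      _ = (n.choose (a + 4) * (a + 4)) * ((a + 3) * (2 * a + 6) * (2 * a + 5)) := by ring
      _ = (n.choose (a + 3) * (2 * a + 7)) * ((a + 3) * (2 * a + 6) * (2 * a + 5)) := by rw [h3]
      _ = (n.choose (a + 3) * (a + 3)) * ((2 * a + 7) * (2 * a + 6) * (2 * a + 5)) := by ring
      _ = (n.choose (a + 2) * (2 * a + 8)) * ((2 * a + 7) * (2 * a + 6) * (2 * a + 5)) := by rw [h2]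
      _ = n.choose (a + 2) * ((2 * a + 8) * (2 * a + 7) * (2 * a + 6) * (2 * a + 5)) := by ring
  have hsmall : (a + 5) * (a + 6) ≤ (2 * a + 7) * (2 * a + 5) := by nlinarith
  have hD : 4 * ((a + 3) * (a + 4) * (a + 5) * (a + 6)) ≤
      (2 * a + 8) * (2 * a + 7) * (2 * a + 6) * (2 * a + 5) := by
    calc 4 * ((a + 3) * (a + 4) * (a + 5) * (a + 6))
        = (2 * a + 8) * (2 * a + 6) * ((a + 5) * (a + 6)) := by ring
      _ ≤ (2 * a + 8) * (2 * a + 6) * ((2 * a + 7) * (2 * a + 5)) :=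
          Nat.mul_le_mul_left _ hsmall
      _ = (2 * a + 8) * (2 * a + 7) * (2 * a + 6) * (2 * a + 5) := by ring
  have hfinal : 4 * n.choose (a + 2) ≤ n.choose (a + 6) := by
    have hDpos : 0 < (a + 3) * (a + 4) * (a + 5) * (a + 6) :=
      Nat.mul_pos (Nat.mul_pos (Nat.mul_pos (by omega) (by omega)) (by omega)) (by omega)
    apply Nat.le_of_mul_le_mul_right _ hDpos
    calc 4 * n.choose (a + 2) * ((a + 3) * (a + 4) * (a + 5) * (a + 6))
        = n.choose (a + 2) * (4 * ((a + 3) * (a + 4) * (a + 5) * (a + 6))) := by ring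
      _ ≤ n.choose (a + 2) * ((2 * a + 8) * (2 * a + 7) * (2 * a + 6) * (2 * a + 5)) :=
          Nat.mul_le_mul_left _ hD
      _ = n.choose (a + 6) * ((a + 3) * (a + 4) * (a + 5) * (a + 6)) := hchain.symm
  have hsub1 : a + 3 - 2 = a + 1 := by omega
  have hsub2 : a + 3 - 1 = a + 2 := by omega
  have hsub3 : a + 3 + 3 = a + 6 := by omega
  rw [hsub1, hsub2, hsub3]
  omega
end
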